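/- Let f₁, f₂, f₃ be an ℝ-basis of Euclidean space ℝ³ and let L be its ℤ-span (the Bravais lattice generated by f₁, f₂, f₃). Let n ∈ ℝ³ be nonzero and suppose the plane with normal n is rational, i.e. the inner product ⟨n, fⱼ⟩ is an integer for each j = 1, 2, 3. Then there exist vectors h₁, h₂, h₃ ∈ ℝ³ that are linearly independent over ℝ, whose ℤ-span equals L, and which satisfy ⟨n, h₂⟩ = 0 and ⟨n, h₃⟩ = 0; that is, the lattice admits a unit cell with one face parallel to the given plane. -/

import Mathlib

open RealInnerProductSpace

/-- A Bravais lattice in ℝ³ with a rational plane (normal `n`) admits an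
equivalent set of lattice vectors `h` with `h₂ ⊥ n` and `h₃ ⊥ n`:
a unit cell with one face parallel to the plane. -/
theorem bravais_lattice_basis_with_face_parallel_to_plane
    (f : Module.Basis (Fin 3) ℝ (EuclideanSpace ℝ (Fin 3)))
    (n : EuclideanSpace ℝ (Fin 3)) (hn : n ≠ 0)
    (hrat : ∀ j : Fin 3, ∃ m : ℤ, ⟪n, f j⟫ = (m : ℝ)) :
    ∃ h : Fin 3 → EuclideanSpace ℝ (Fin 3),
      LinearIndependent ℝ h ∧
      Submodule.span ℤ (Set.range h)
        = Submodule.span ℤ (Set.range (f : Fin 3 → EuclideanSpace ℝ (Fin 3))) ∧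
      ⟪n, h 1⟫ = 0 ∧ ⟪n, h 2⟫ = 0 := by
  classical
  choose m hm using hrat
  -- the integer linear functional
  set θ : (Fin 3 → ℤ) →ₗ[ℤ] ℤ := Fintype.linearCombination ℤ m with hθdef
  have hθapp : ∀ c : Fin 3 → ℤ, θ c = ∑ k, c k * m k := by
    intro c; simp [hθdef, Fintype.linearCombination_apply]
  -- some m k is nonzero, else n = 0
  have hm0 : ∃ k, m k ≠ 0 := by
    by_contra h0
    push_neg at h0
    have hinner : ∀ v : EuclideanSpace ℝ (Fin 3), ⟪n, v⟫ = 0 := by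
      intro v
      have := f.sum_repr v
      rw [← this, inner_sum]
      simp only [real_inner_smul_right, hm, h0]
      simp
    exact hn (by simpa [real_inner_self_eq_norm_sq] using
      inner_self_eq_zero.mp (hinner n))
  -- θ ≠ 0 : its range is a nonzero principal submodule of ℤ
  have hprin : (LinearMap.range θ).IsPrincipal := inferInstance
  set d : ℤ := Submodule.IsPrincipal.generator (LinearMap.range θ) with hddef
  obtain ⟨x, hx⟩ : d ∈ LinearMap.range θ :=
    Submodule.IsPrincipal.generator_mem _
  have hrange : LinearMap.range θ = Submodule.span ℤ {d} := by
    rw [hddef, Submodule.IsPrincipal.span_singleton_generator]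
  have hd0 : d ≠ 0 := by
    intro hd
    obtain ⟨k, hk⟩ := hm0
    have hmem : (m k : ℤ) ∈ LinearMap.range θ := by
      refine ⟨Pi.single k 1, ?_⟩
      simp [hθapp, Pi.single_apply]
    rw [hrange, hd, Submodule.span_zero_singleton] at hmem
    exact hk (by simpa using hmem)
  have hx0 : x ≠ 0 := by
    intro h0; apply hd0; rw [← hx, h0, map_zero]
  -- basis of the kernel
  set K := LinearMap.ker θ with hKdef
  obtain ⟨r, kb⟩ := Submodule.basisOfPid (Pi.basisFun ℤ (Fin 3)) K
  -- the combined family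
  set u : Fin 1 ⊕ Fin r → (Fin 3 → ℤ) :=
    Sum.elim (fun _ => x) (fun i => (kb i : Fin 3 → ℤ)) with hudef
  have hKspan : Submodule.span ℤ (Set.range fun i => (kb i : Fin 3 → ℤ)) = K := by
    have h1 : (Set.range fun i => (kb i : Fin 3 → ℤ)) = K.subtype '' Set.range kb := by
      rw [← Set.range_comp]; rfl
    rw [h1, ← Submodule.map_span, kb.span_eq, Submodule.map_top, Submodule.range_subtype]
  have hulin : LinearIndependent ℤ u := by
    apply LinearIndependent.sum_type
    · exact linearIndependent_unique_iff.mpr hx0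
    · exact kb.linearIndependent.map' K.subtype K.ker_subtype
    · rw [hKspan]
      rw [Set.range_const, disjoint_iff]
      ext v
      simp only [Submodule.mem_inf, Submodule.mem_bot, Submodule.mem_span_singleton]
      constructor
      · rintro ⟨⟨c, rfl⟩, hvK⟩
        have : c * d = 0 := by
          have := hvK
          rw [hKdef, LinearMap.mem_ker] at this
          rw [map_smul] at this
          simpa [hx] using this
        have hc : c = 0 := by
          rcases mul_eq_zero.mp this with h | h
          · exact h
          · exact absurd h hd0
        simp [hc]
      · rintro rfl
        exact ⟨⟨0, by simp⟩, Submodule.zero_mem _⟩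
  have huspan : ⊤ ≤ Submodule.span ℤ (Set.range u) := by
    intro v _
    have hv : θ v ∈ Submodule.span ℤ ({d} : Set ℤ) := by
      rw [← hrange]; exact ⟨v, rfl⟩
    obtain ⟨c, hc⟩ := Submodule.mem_span_singleton.mp hv
    have hker : v - c • x ∈ K := by
      rw [hKdef, LinearMap.mem_ker, map_sub, map_smul, hx, sub_eq_zero]
      exact hc.symm
    have h1 : v - c • x ∈ Submodule.span ℤ (Set.range u) := by
      apply Submodule.span_mono (s := Set.range fun i => (kb i : Fin 3 → ℤ))
      · intro y hy
        obtain ⟨i, rfl⟩ := hy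
        exact ⟨Sum.inr i, rfl⟩
      · rw [hKspan]; exact hker
    have h2 : c • x ∈ Submodule.span ℤ (Set.range u) :=
      Submodule.smul_mem _ _ (Submodule.subset_span ⟨Sum.inl 0, rfl⟩)
    have := Submodule.add_mem _ h2 h1
    simpa using this
  -- compare cardinalities to get r = 2
  set B : Module.Basis (Fin 1 ⊕ Fin r) ℤ (Fin 3 → ℤ) := Module.Basis.mk hulin huspan with hBdef
  have hcard : 1 + r = 3 := by
    have e := B.indexEquiv (Pi.basisFun ℤ (Fin 3))
    simpa using Fintype.card_congr e
  have hr : r = 2 := by omega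
  subst hr
  -- the new integer basis of ℤ³, indexed by Fin 3
  set g : Fin 3 → (Fin 3 → ℤ) := fun i => B (finSumFinEquiv.symm i) with hgdef
  have hgspan : Submodule.span ℤ (Set.range g) = ⊤ := by
    have h1 : Set.range g = Set.range ⇑B :=
      Function.Surjective.range_comp finSumFinEquiv.symm.surjective ⇑B
    rw [h1]; exact B.span_eq
  have hg1 : g 1 ∈ K := by
    have h1 : finSumFinEquiv.symm (1 : Fin 3) = Sum.inr (0 : Fin 2) := by decide
    rw [hgdef]; simp only [h1]
    rw [hBdef, Module.Basis.mk_apply]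
    exact (kb 0).2
  have hg2 : g 2 ∈ K := by
    have h1 : finSumFinEquiv.symm (2 : Fin 3) = Sum.inr (1 : Fin 2) := by decide
    rw [hgdef]; simp only [h1]
    rw [hBdef, Module.Basis.mk_apply]
    exact (kb 1).2
  -- the map sending integer coordinates to lattice vectors
  set F : (Fin 3 → ℤ) →ₗ[ℤ] EuclideanSpace ℝ (Fin 3) := Fintype.linearCombination ℤ ⇑f with hFdef
  have hFrange : LinearMap.range F = Submodule.span ℤ (Set.range ⇑f) := by
    simp [hFdef]
  have key : ∀ c : Fin 3 → ℤ, ⟪n, F c⟫ = ((θ c : ℤ) : ℝ) := by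
    intro c
    have h1 : F c = ∑ k, c k • f k := rfl
    rw [h1, inner_sum]
    simp_rw [← Int.cast_smul_eq_zsmul ℝ, real_inner_smul_right, hm, hθapp]
    push_cast
    rfl
  refine ⟨fun j => F (g j), ?_, ?_, ?_, ?_⟩
  case refine_2 =>
    have h1 : Set.range (fun j => F (g j)) = F '' Set.range g := by
      rw [← Set.range_comp]; rfl
    rw [h1, ← Submodule.map_span, hgspan, Submodule.map_top, hFrange]
  case refine_3 =>
    have hker : θ (g 1) = 0 := LinearMap.mem_ker.mp hg1
    simpa [hker] using key (g 1)
  case refine_4 =>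
    have hker : θ (g 2) = 0 := LinearMap.mem_ker.mp hg2
    simpa [hker] using key (g 2)
  case refine_1 =>
    set h : Fin 3 → EuclideanSpace ℝ (Fin 3) := fun j => F (g j) with hhdef
    have hspaneq : Submodule.span ℤ (Set.range h)
        = Submodule.span ℤ (Set.range ⇑f) := by
      have h1 : Set.range h = F '' Set.range g := by
        rw [hhdef, ← Set.range_comp]; rfl
      rw [h1, ← Submodule.map_span, hgspan, Submodule.map_top, hFrange]
    have hsub : Submodule.span ℤ (Set.range h)
        ≤ (Submodule.span ℝ (Set.range h)).restrictScalars ℤ :=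
      Submodule.span_le.2 fun v hv => Submodule.subset_span hv
    have hspanR : ⊤ ≤ Submodule.span ℝ (Set.range h) := by
      rw [← f.span_eq]
      apply Submodule.span_le.2
      rintro v ⟨k, rfl⟩
      have : f k ∈ Submodule.span ℤ (Set.range h) := by
        rw [hspaneq]; exact Submodule.subset_span ⟨k, rfl⟩
      exact hsub this
    have hcard3 : Fintype.card (Fin 3) = Module.finrank ℝ (EuclideanSpace ℝ (Fin 3)) := by
      simp
    have := (basisOfTopLeSpanOfCardEqFinrank h hspanR hcard3).linearIndependent
    rwa [coe_basisOfTopLeSpanOfCardEqFinrank] at this
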